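/- Let M be a linear subspace of the d×d complex matrices with M† = M and I_d ∈ M. Then there exist finitely many positive definite matrices F_0, F_1, …, F_n ∈ M such that ∑_{k=0}^n F_k = I_d and span{F_0, F_1, …, F_n} = M. -/

import Mathlib

open Matrix
open scoped ComplexOrder

lemma posdef_unitary_conj {d : ℕ} {U : Matrix (Fin d) (Fin d) ℂ}
    (hU : U ∈ Matrix.unitaryGroup (Fin d) ℂ) {D : Matrix (Fin d) (Fin d) ℂ} (hD : D.PosDef) :
    (U * D * star U).PosDef := by
  have hU1 : U * star U = 1 := Matrix.mem_unitaryGroup_iff.mp hU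
  rw [posDef_iff_dotProduct_mulVec]
  constructor
  · show (U * D * star U)ᴴ = U * D * star U
    simp only [Matrix.star_eq_conjTranspose, conjTranspose_mul, conjTranspose_conjTranspose,
      hD.1.eq, mul_assoc]
  · intro x hx
    set y := (star U) *ᵥ x with hy
    have hyne : y ≠ 0 := by
      intro h
      apply hx
      have : U *ᵥ y = x := by
        rw [hy, mulVec_mulVec, hU1, one_mulVec]
      rw [h, mulVec_zero] at this
      exact this.symm
    have h1 : (U * D * star U) *ᵥ x = U *ᵥ (D *ᵥ y) := by
      rw [hy, mulVec_mulVec, mulVec_mulVec, mul_assoc]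
    have h2 : star x ⬝ᵥ (U *ᵥ (D *ᵥ y)) = star y ⬝ᵥ (D *ᵥ y) := by
      rw [Matrix.dotProduct_mulVec, hy]
      congr 1
      rw [star_mulVec, Matrix.star_eq_conjTranspose, conjTranspose_conjTranspose]
    rw [h1, h2]
    exact hD.dotProduct_mulVec_pos hyne

lemma posdef_small_perturb {d : ℕ} {H : Matrix (Fin d) (Fin d) ℂ} (hH : H.IsHermitian)
    {c : ℝ} (hc : 0 < c) :
    ∃ δ0 : ℝ, 0 < δ0 ∧ ∀ δ : ℝ, 0 < δ → δ ≤ δ0 →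
      ((c : ℂ) • (1 : Matrix (Fin d) (Fin d) ℂ) + (δ : ℂ) • H).PosDef := by
  classical
  set e := hH.eigenvalues with he
  set B := ∑ i, |e i| with hBdef
  have hB : 0 ≤ B := Finset.sum_nonneg fun i _ => abs_nonneg _
  refine ⟨c / (B + 1), by positivity, fun δ hδ hδle => ?_⟩
  have hentry : ∀ i, 0 < c + δ * e i := by
    intro i
    have h1 : |e i| ≤ B :=
      Finset.single_le_sum (f := fun i => |e i|) (fun i _ => abs_nonneg _) (Finset.mem_univ i)
    have h2 : δ * |e i| < c := by
      calc δ * |e i| ≤ (c / (B + 1)) * B := by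
            apply mul_le_mul hδle h1 (abs_nonneg _) (by positivity)
        _ < c := by
            rw [div_mul_eq_mul_div, div_lt_iff₀ (by positivity)]
            nlinarith
    nlinarith [neg_abs_le (e i), hδ.le]
  set U : Matrix (Fin d) (Fin d) ℂ := (hH.eigenvectorUnitary : Matrix (Fin d) (Fin d) ℂ) with hUdef
  have hU1 : U * star U = 1 := Matrix.mem_unitaryGroup_iff.mp hH.eigenvectorUnitary.2
  have key : (c : ℂ) • (1 : Matrix (Fin d) (Fin d) ℂ) + (δ : ℂ) • H
      = U * diagonal (fun i => ((c + δ * e i : ℝ) : ℂ)) * star U := by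
    have hd : (diagonal (fun i => ((c + δ * e i : ℝ) : ℂ)) : Matrix (Fin d) (Fin d) ℂ)
        = (c : ℂ) • 1 + (δ : ℂ) • diagonal (RCLike.ofReal ∘ e) := by
      ext i j
      by_cases h : i = j
      · subst h
        simp [diagonal_apply, Matrix.one_apply, RCLike.ofReal]
      · simp [diagonal_apply, Matrix.one_apply, h]
    rw [hd, mul_add, add_mul, Matrix.mul_smul, Matrix.smul_mul, Matrix.mul_smul,
      Matrix.smul_mul, mul_one, hU1]
    conv_lhs => rw [hH.spectral_theorem, Unitary.conjStarAlgAut_apply]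
  rw [key]
  exact posdef_unitary_conj hH.eigenvectorUnitary.2
    (Matrix.PosDef.diagonal fun i => by exact_mod_cast hentry i)

/-- a subspace `M` of `d × d` matrices with `M† = M` and `I ∈ M` is spanned
by finitely many positive definite matrices `F_0, …, F_n ∈ M` summing to the identity. -/
theorem stmt_2 {d : ℕ} (M : Submodule ℂ (Matrix (Fin d) (Fin d) ℂ))
    (hM : (fun X : Matrix (Fin d) (Fin d) ℂ => Xᴴ) '' (M : Set (Matrix (Fin d) (Fin d) ℂ)) = M)
    (hI : (1 : Matrix (Fin d) (Fin d) ℂ) ∈ M) :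
    ∃ (n : ℕ) (F : Fin (n + 1) → Matrix (Fin d) (Fin d) ℂ),
      (∀ k, F k ∈ M) ∧ (∀ k, (F k).PosDef) ∧ (∑ k, F k = 1) ∧
      Submodule.span ℂ (Set.range F) = M := by
  classical
  have hconj : ∀ X ∈ M, Xᴴ ∈ M := by
    intro X hX
    have : Xᴴ ∈ (fun X : Matrix (Fin d) (Fin d) ℂ => Xᴴ) '' (M : Set _) := ⟨X, hX, rfl⟩
    rwa [hM] at this
  set m := Module.finrank ℂ M with hm
  let b : Module.Basis (Fin m) ℂ M := Module.finBasis ℂ M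
  let A : Fin m → Matrix (Fin d) (Fin d) ℂ := fun i => (b i : Matrix (Fin d) (Fin d) ℂ)
  have hAmem : ∀ i, A i ∈ M := fun i => (b i).2
  have hspanA : Submodule.span ℂ (Set.range A) = M := by
    have hr : Set.range A = M.subtype '' Set.range b := by
      rw [← Set.range_comp]; rfl
    rw [hr, ← Submodule.map_span, b.span_eq, Submodule.map_top, Submodule.range_subtype]
  let H : Fin m ⊕ Fin m → Matrix (Fin d) (Fin d) ℂ :=
    Sum.elim (fun i => A i + (A i)ᴴ) (fun i => Complex.I • (A i - (A i)ᴴ))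
  have hHmem : ∀ j, H j ∈ M := by
    rintro (i | i)
    · exact M.add_mem (hAmem i) (hconj _ (hAmem i))
    · exact M.smul_mem _ (M.sub_mem (hAmem i) (hconj _ (hAmem i)))
  have hHherm : ∀ j, (H j).IsHermitian := by
    rintro (i | i)
    · show (A i + (A i)ᴴ)ᴴ = A i + (A i)ᴴ
      rw [conjTranspose_add, conjTranspose_conjTranspose, add_comm]
    · show (Complex.I • (A i - (A i)ᴴ))ᴴ = Complex.I • (A i - (A i)ᴴ)
      rw [conjTranspose_smul, conjTranspose_sub, conjTranspose_conjTranspose]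
      rw [Complex.star_def, Complex.conj_I, neg_smul, ← smul_neg, neg_sub]
  have hspanH : Submodule.span ℂ (Set.range H) = M := by
    apply le_antisymm
    · rw [Submodule.span_le]; rintro _ ⟨j, rfl⟩; exact hHmem j
    · rw [← hspanA, Submodule.span_le]
      rintro _ ⟨i, rfl⟩
      have h1 : H (Sum.inl i) ∈ Submodule.span ℂ (Set.range H) :=
        Submodule.subset_span ⟨_, rfl⟩
      have h2 : H (Sum.inr i) ∈ Submodule.span ℂ (Set.range H) :=
        Submodule.subset_span ⟨_, rfl⟩
      have key : A i = (2⁻¹ : ℂ) • H (Sum.inl i) + (-Complex.I / 2) • H (Sum.inr i) := by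
        show A i = (2⁻¹ : ℂ) • (A i + (A i)ᴴ)
          + (-Complex.I / 2) • (Complex.I • (A i - (A i)ᴴ))
        rw [smul_smul]
        have hval : (-Complex.I / 2) * Complex.I = (2⁻¹ : ℂ) := by
          rw [div_mul_eq_mul_div, neg_mul, Complex.I_mul_I, neg_neg]
          norm_num
        rw [hval]
        module
      rw [key]
      exact Submodule.add_mem _ (Submodule.smul_mem _ _ h1) (Submodule.smul_mem _ _ h2)
  set n := m + m with hn
  let G : Fin n → Matrix (Fin d) (Fin d) ℂ := fun k => H (finSumFinEquiv.symm k)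
  let K : Fin (n + 1) → Matrix (Fin d) (Fin d) ℂ := Fin.snoc G (-(∑ k, G k))
  have hKmem : ∀ j, K j ∈ M := by
    refine Fin.lastCases ?_ ?_
    · show K (Fin.last n) ∈ M
      have : K (Fin.last n) = -(∑ k, G k) := by simp [K]
      rw [this]
      exact M.neg_mem (Submodule.sum_mem _ fun k _ => hHmem _)
    · intro k
      have : K (Fin.castSucc k) = G k := by simp [K]
      rw [this]
      exact hHmem _
  have hKherm : ∀ j, (K j).IsHermitian := by
    refine Fin.lastCases ?_ ?_
    · have : K (Fin.last n) = -(∑ k, G k) := by simp [K]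
      rw [this]
      refine IsHermitian.neg ?_
      show (∑ k, G k)ᴴ = ∑ k, G k
      rw [conjTranspose_sum]
      exact Finset.sum_congr rfl fun k _ => (hHherm _).eq
    · intro k
      have : K (Fin.castSucc k) = G k := by simp [K]
      rw [this]
      exact hHherm _
  set c : ℝ := ((n : ℝ) + 1)⁻¹ with hcdef
  have hc : 0 < c := by positivity
  choose δ0 hδ0pos hδ0 using fun j => posdef_small_perturb (hKherm j) hc
  set δ := Finset.univ.inf' Finset.univ_nonempty δ0 with hδdef
  have hδpos : 0 < δ := (Finset.lt_inf'_iff _).mpr fun j _ => hδ0pos j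
  let F : Fin (n + 1) → Matrix (Fin d) (Fin d) ℂ := fun j => (c : ℂ) • 1 + (δ : ℂ) • K j
  have hKsum : ∑ j, K j = 0 := by
    rw [Fin.sum_univ_castSucc]
    simp [K]
  have hFsum : ∑ j, F j = 1 := by
    have : ∑ j, F j = ((Finset.univ : Finset (Fin (n + 1))).card : ℕ) • ((c : ℂ) • (1 : Matrix (Fin d) (Fin d) ℂ))
        + (δ : ℂ) • ∑ j, K j := by
      simp only [F]
      rw [Finset.sum_add_distrib, Finset.sum_const, ← Finset.smul_sum]
    rw [this, hKsum, smul_zero, add_zero, Finset.card_univ, Fintype.card_fin,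
      ← Nat.cast_smul_eq_nsmul ℂ, smul_smul]
    have : ((n + 1 : ℕ) : ℂ) * (c : ℂ) = 1 := by
      rw [hcdef]
      push_cast
      field_simp
    rw [this, one_smul]
  have hFmem : ∀ k, F k ∈ M :=
    fun k => M.add_mem (M.smul_mem _ hI) (M.smul_mem _ (hKmem k))
  refine ⟨n, F, hFmem, ?_, hFsum, ?_⟩
  · intro k
    exact hδ0 k δ hδpos (Finset.inf'_le _ (Finset.mem_univ k))
  · apply le_antisymm
    · rw [Submodule.span_le]; rintro _ ⟨k, rfl⟩; exact hFmem k
    · have hone : (1 : Matrix (Fin d) (Fin d) ℂ) ∈ Submodule.span ℂ (Set.range F) := by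
        rw [← hFsum]
        exact Submodule.sum_mem _ fun k _ => Submodule.subset_span ⟨k, rfl⟩
      have hG : ∀ k : Fin n, G k ∈ Submodule.span ℂ (Set.range F) := by
        intro k
        have h1 : F (Fin.castSucc k) ∈ Submodule.span ℂ (Set.range F) :=
          Submodule.subset_span ⟨_, rfl⟩
        have h2 : (δ : ℂ) • G k = F (Fin.castSucc k) - (c : ℂ) • 1 := by
          show (δ : ℂ) • G k = (c : ℂ) • 1 + (δ : ℂ) • K (Fin.castSucc k) - (c : ℂ) • 1
          have : K (Fin.castSucc k) = G k := by simp [K]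
          rw [this]
          abel
        have h3 : (δ : ℂ) • G k ∈ Submodule.span ℂ (Set.range F) := by
          rw [h2]
          exact sub_mem h1 (Submodule.smul_mem _ _ hone)
        have h4 := Submodule.smul_mem _ ((δ : ℂ)⁻¹) h3
        rwa [smul_smul, inv_mul_cancel₀ (by exact_mod_cast hδpos.ne'), one_smul] at h4
      rw [← hspanH, Submodule.span_le]
      rintro _ ⟨j, rfl⟩
      have := hG (finSumFinEquiv j)
      simpa [G] using this
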